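/- Let i, j ≥ 1 with i + j = n + 1, let 1 ≤ k ≤ i−1 and 1 ≤ k' ≤ j−1, and let 𝒳^{(n−1)}_{i−1} = { x_I : I ⊆ {1,…,n−1}, |I| = i−1 }. Then the following three maps are well-defined surjective homomorphisms of ℂ[S_{n−1}]-modules: φ_0 : R^{n−1}_{i−1,j} → R^n_{i,j}/⟨x_n, y_n, 𝒳^{(n−1)}_{i−1}⟩ sending the class of P to the class of P; φ_k : R^{n−1}_{i−1,j} → ⟨x_n^k, y_n, 𝒳^{(n−1)}_{i−1}⟩/⟨x_n^{k+1}, y_n, 𝒳^{(n−1)}_{i−1}⟩ (ideals in R^n_{i,j}) sending the class of P to the class of x_n^k P; and φ'_{k'} : R^{n−1}_{i,j−1} → ⟨y_n^{k'}⟩/⟨y_n^{k'+1}⟩ (ideals in R^n_{i,j}) sending the class of P to the class of y_n^{k'} P. Here P ranges over polynomials in x_1,…,x_{n−1},y_1,…,y_{n−1}, and S_{n−1} ≤ S_n permutes the first n−1 indices. -/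

import Mathlib

open MvPolynomial

set_option maxHeartbeats 1000000
set_option synthInstance.maxHeartbeats 400000

noncomputable section

/-- the ideal `(x₁y₁, …, xₙyₙ)`. -/
abbrev Bideal (n : ℕ) : Ideal (MvPolynomial (Fin n ⊕ Fin n) ℂ) :=
  Ideal.span (Set.range fun i : Fin n => X (Sum.inl i) * X (Sum.inr i))

/-- `B n = ℂ[x₁,…,xₙ,y₁,…,yₙ]/(x₁y₁,…,xₙyₙ)`, the `n`-th tensor power of `ℂ[x,y]/(xy)`.
The variable `x_i` is `X (Sum.inl i)` and `y_i` is `X (Sum.inr i)`. -/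
abbrev B (n : ℕ) : Type := MvPolynomial (Fin n ⊕ Fin n) ℂ ⧸ Bideal n

abbrev mkB (n : ℕ) : MvPolynomial (Fin n ⊕ Fin n) ℂ →ₐ[ℂ] B n :=
  Ideal.Quotient.mkₐ ℂ (Bideal n)

def xv (n : ℕ) (i : Fin n) : B n := mkB n (X (Sum.inl i))
def yv (n : ℕ) (i : Fin n) : B n := mkB n (X (Sum.inr i))

/-- the action of a permutation `σ ∈ Sₙ` on `B n`: `σ·xᵢ = x_{σ i}`, `σ·yᵢ = y_{σ i}`. -/
def permB (n : ℕ) (σ : Equiv.Perm (Fin n)) : B n →ₐ[ℂ] B n :=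
  Ideal.Quotient.liftₐ (Bideal n)
    ((mkB n).comp (MvPolynomial.rename (Sum.map ⇑σ ⇑σ)))
    (by
      intro a ha
      have h : Bideal n ≤ RingHom.ker ((mkB n).comp (MvPolynomial.rename (Sum.map ⇑σ ⇑σ))).toRingHom := by
        rw [Ideal.span_le]
        rintro _ ⟨i, rfl⟩
        simp only [SetLike.mem_coe, RingHom.mem_ker, AlgHom.toRingHom_eq_coe, RingHom.coe_coe,
          AlgHom.comp_apply, map_mul, rename_X, Sum.map_inl, Sum.map_inr]
        rw [← map_mul, Ideal.Quotient.mkₐ_eq_mk, Ideal.Quotient.eq_zero_iff_mem]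
        exact Ideal.subset_span ⟨σ i, rfl⟩
      exact h ha)

/-- evaluation at the origin. -/
def ev0 (n : ℕ) : B n →ₐ[ℂ] ℂ :=
  Ideal.Quotient.liftₐ (Bideal n) (aeval fun _ => (0 : ℂ))
    (by
      intro a ha
      have h : Bideal n ≤ RingHom.ker (aeval (R := ℂ) fun _ : Fin n ⊕ Fin n => (0 : ℂ)).toRingHom := by
        rw [Ideal.span_le]
        rintro _ ⟨i, rfl⟩
        simp [RingHom.mem_ker]
      exact h ha)

/-- `Jₙ`, the ideal of `B n` generated by the `Sₙ`-invariant elements vanishing at the origin. -/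
def Jn (n : ℕ) : Ideal (B n) :=
  Ideal.span {p : B n | (∀ σ : Equiv.Perm (Fin n), permB n σ p = p) ∧ ev0 n p = 0}

/-- the symmetric coinvariant algebra `Rₙ = Bₙ/Jₙ`. -/
abbrev Rn (n : ℕ) : Type := B n ⧸ Jn n

/-- the `k`-th elementary symmetric polynomial `e_k` in the `x` variables. -/
def eX (n k : ℕ) : B n :=
  ∑ S ∈ Finset.powersetCard k (Finset.univ : Finset (Fin n)), ∏ t ∈ S, xv n t

/-- the `k`-th elementary symmetric polynomial `f_k` in the `y` variables. -/
def fY (n k : ℕ) : B n :=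
  ∑ S ∈ Finset.powersetCard k (Finset.univ : Finset (Fin n)), ∏ t ∈ S, yv n t

/-- the generating set `S^n_{i,j}` of the ideal `I^n_{i,j}`:
`e₁,…,e_{i−1}`, all `x_I` with `|I| = i`, `f₁,…,f_{j−1}`, all `y_J` with `|J| = j`. -/
def Sij (n i j : ℕ) : Set (B n) :=
  {p | ∃ k, 1 ≤ k ∧ k < i ∧ p = eX n k} ∪
  {p | ∃ I : Finset (Fin n), I.card = i ∧ p = ∏ t ∈ I, xv n t} ∪
  {p | ∃ k, 1 ≤ k ∧ k < j ∧ p = fY n k} ∪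
  {p | ∃ J : Finset (Fin n), J.card = j ∧ p = ∏ t ∈ J, yv n t}

/-- the ideal `I^n_{i,j}`; `R^n_{i,j} = B n ⧸ Iij n i j`. -/
def Iij (n i j : ℕ) : Ideal (B n) := Ideal.span (Sij n i j)

/-- the subquotient `K / K'` of two ideals of `B n`, as a `ℂ`-module. -/
abbrev SQ (n : ℕ) (K K' : Ideal (B n)) : Type :=
  ↥(K.restrictScalars ℂ) ⧸
    (Submodule.comap (K.restrictScalars ℂ).subtype (K'.restrictScalars ℂ))

/-- the class in `K / K'` of an element `p ∈ K`. -/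
def sqMk (n : ℕ) (K K' : Ideal (B n)) (p : B n) (hp : p ∈ K) : SQ n K K' :=
  Submodule.Quotient.mk ⟨p, hp⟩

/-- the inclusion `B m → B n` sending `x_t ↦ x_t`, `y_t ↦ y_t`. -/
def inclB (m n : ℕ) (h : m ≤ n) : B m →ₐ[ℂ] B n :=
  Ideal.Quotient.liftₐ (Bideal m)
    ((mkB n).comp (MvPolynomial.rename (Sum.map (Fin.castLE h) (Fin.castLE h))))
    (by
      intro a ha
      have hker : Bideal m ≤ RingHom.ker
          ((mkB n).comp (MvPolynomial.rename (Sum.map (Fin.castLE h) (Fin.castLE h)))).toRingHom := by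
        rw [Ideal.span_le]
        rintro _ ⟨i, rfl⟩
        simp only [SetLike.mem_coe, RingHom.mem_ker, AlgHom.toRingHom_eq_coe, RingHom.coe_coe,
          AlgHom.comp_apply, map_mul, rename_X, Sum.map_inl, Sum.map_inr]
        rw [← map_mul, Ideal.Quotient.mkₐ_eq_mk, Ideal.Quotient.eq_zero_iff_mem]
        exact Ideal.subset_span ⟨Fin.castLE h i, rfl⟩
      exact hker ha)

/-- extension of a permutation of `Fin m` to a permutation of `Fin n`
(acting as the identity on the extra letters). -/
def extPerm (m n : ℕ) (h : m ≤ n) (σ : Equiv.Perm (Fin m)) : Equiv.Perm (Fin n) :=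
  σ.viaFintypeEmbedding ⟨Fin.castLE h, Fin.castLE_injective h⟩

/-- `𝒳^{(n−1)}_{i−1} = { x_I : I ⊆ {1,…,n−1}, |I| = i−1 }` inside `B (m+1)` (here `n = m+1`). -/
def XXset (m i : ℕ) : Set (B (m + 1)) :=
  {p | ∃ I : Finset (Fin m), I.card = i - 1 ∧ p = ∏ t ∈ I, xv (m + 1) t.castSucc}

/-- the ideal of `B (m+1)` corresponding to the ideal `⟨xₙ^k, yₙ, 𝒳^{(n−1)}_{i−1}⟩` of
`R^n_{i,j}` (with `n = m+1`). -/
def LkIdeal (m i j k : ℕ) : Ideal (B (m + 1)) :=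
  Iij (m + 1) i j ⊔
    Ideal.span ({xv (m + 1) (Fin.last m) ^ k, yv (m + 1) (Fin.last m)} ∪ XXset m i)

/-- the ideal of `B (m+1)` corresponding to the ideal `⟨xₙ, yₙ, 𝒳^{(n−1)}_{i−1}⟩` of
`R^n_{i,j}` (with `n = m+1`). -/
def L0Ideal (m i j : ℕ) : Ideal (B (m + 1)) :=
  Iij (m + 1) i j ⊔
    Ideal.span ({xv (m + 1) (Fin.last m), yv (m + 1) (Fin.last m)} ∪ XXset m i)

/-- the ideal of `B (m+1)` corresponding to the ideal `⟨yₙ^{k'}⟩` of `R^n_{i,j}`. -/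
def MyIdeal (m i j k' : ℕ) : Ideal (B (m + 1)) :=
  Iij (m + 1) i j ⊔ Ideal.span {yv (m + 1) (Fin.last m) ^ k'}

lemma permB_mk (n : ℕ) (σ : Equiv.Perm (Fin n)) (p : MvPolynomial (Fin n ⊕ Fin n) ℂ) :
    permB n σ (mkB n p) = mkB n (MvPolynomial.rename (Sum.map ⇑σ ⇑σ) p) := rfl

lemma inclB_mk {m n : ℕ} (h : m ≤ n) (p : MvPolynomial (Fin m ⊕ Fin m) ℂ) :
    inclB m n h (mkB m p) = mkB n (MvPolynomial.rename (Sum.map (Fin.castLE h) (Fin.castLE h)) p) := rfl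

lemma xy_zero (n : ℕ) (t : Fin n) : xv n t * yv n t = 0 := by
  rw [xv, yv, ← map_mul, Ideal.Quotient.mkₐ_eq_mk, Ideal.Quotient.eq_zero_iff_mem]
  exact Ideal.subset_span ⟨t, rfl⟩

lemma permB_xv (n : ℕ) (σ : Equiv.Perm (Fin n)) (t : Fin n) :
    permB n σ (xv n t) = xv n (σ t) := by
  rw [xv, permB_mk]; simp [xv]

lemma permB_yv (n : ℕ) (σ : Equiv.Perm (Fin n)) (t : Fin n) :
    permB n σ (yv n t) = yv n (σ t) := by
  rw [yv, permB_mk]; simp [yv]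

lemma castLE_eq_castSucc {m : ℕ} (t : Fin m) : Fin.castLE (Nat.le_succ m) t = t.castSucc := rfl

lemma inclB_xv {m : ℕ} (t : Fin m) :
    inclB m (m+1) (Nat.le_succ m) (xv m t) = xv (m+1) t.castSucc := by
  rw [xv, inclB_mk]; simp [xv, castLE_eq_castSucc]

lemma inclB_yv {m : ℕ} (t : Fin m) :
    inclB m (m+1) (Nat.le_succ m) (yv m t) = yv (m+1) t.castSucc := by
  rw [yv, inclB_mk]; simp [yv, castLE_eq_castSucc]

lemma extPerm_castSucc {m : ℕ} (σ : Equiv.Perm (Fin m)) (t : Fin m) :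
    extPerm m (m+1) (Nat.le_succ m) σ t.castSucc = (σ t).castSucc := by
  have := σ.viaFintypeEmbedding_apply_image
    (⟨Fin.castLE (Nat.le_succ m), Fin.castLE_injective _⟩ : Fin m ↪ Fin (m+1)) t
  simpa [extPerm, castLE_eq_castSucc] using this

lemma extPerm_last {m : ℕ} (σ : Equiv.Perm (Fin m)) :
    extPerm m (m+1) (Nat.le_succ m) σ (Fin.last m) = Fin.last m := by
  apply Equiv.Perm.viaFintypeEmbedding_apply_notMem_range
  rintro ⟨t, ht⟩
  have : (t : ℕ) = m := by
    have := congrArg Fin.val ht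
    simpa [castLE_eq_castSucc] using this
  omega

lemma permB_inclB {m : ℕ} (σ : Equiv.Perm (Fin m)) (P : B m) :
    permB (m+1) (extPerm m (m+1) (Nat.le_succ m) σ) (inclB m (m+1) (Nat.le_succ m) P) =
      inclB m (m+1) (Nat.le_succ m) (permB m σ P) := by
  obtain ⟨p, rfl⟩ := Ideal.Quotient.mkₐ_surjective ℂ _ P
  rw [inclB_mk, permB_mk, permB_mk, inclB_mk, MvPolynomial.rename_rename,
    MvPolynomial.rename_rename]
  have hfun : (Sum.map ⇑(extPerm m (m+1) (Nat.le_succ m) σ) ⇑(extPerm m (m+1) (Nat.le_succ m) σ)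
      ∘ Sum.map (Fin.castLE (Nat.le_succ m)) (Fin.castLE (Nat.le_succ m))) =
      (Sum.map (Fin.castLE (Nat.le_succ m)) (Fin.castLE (Nat.le_succ m)) ∘ Sum.map ⇑σ ⇑σ) := by
    funext v
    rcases v with t | t
    · simp [castLE_eq_castSucc, extPerm_castSucc]
    · simp [castLE_eq_castSucc, extPerm_castSucc]
  rw [hfun]

lemma decompB {m : ℕ} (Q : B (m+1)) :
    ∃ P A B', Q = inclB m (m+1) (Nat.le_succ m) P
      + xv (m+1) (Fin.last m) * A + yv (m+1) (Fin.last m) * B' := by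
  obtain ⟨q, rfl⟩ := Ideal.Quotient.mkₐ_surjective ℂ _ Q
  induction q using MvPolynomial.induction_on with
  | C a =>
    refine ⟨MvPolynomial.C a |> mkB m, 0, 0, ?_⟩
    rw [inclB_mk]
    simp
  | add p q hp hq =>
    obtain ⟨P1, A1, B1, h1⟩ := hp
    obtain ⟨P2, A2, B2, h2⟩ := hq
    refine ⟨P1 + P2, A1 + A2, B1 + B2, ?_⟩
    rw [map_add (mkB (m+1)), h1, h2, map_add]
    ring
  | mul_X p v hp =>
    obtain ⟨P, A, B', h1⟩ := hp
    have hmul : mkB (m+1) (p * MvPolynomial.X v) = mkB (m+1) p * mkB (m+1) (MvPolynomial.X v) :=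
      map_mul _ _ _
    rcases v with t | t
    · rcases Fin.eq_castSucc_or_eq_last t with ⟨s, rfl⟩ | rfl
      · refine ⟨P * xv m s, A * xv (m+1) s.castSucc, B' * xv (m+1) s.castSucc, ?_⟩
        rw [hmul]
        show mkB (m+1) p * xv (m+1) s.castSucc = _
        rw [map_mul, inclB_xv, h1]
        ring
      · refine ⟨0, mkB (m+1) p, 0, ?_⟩
        rw [hmul]
        show mkB (m+1) p * xv (m+1) (Fin.last m) =
          inclB m (m+1) (Nat.le_succ m) 0 + xv (m+1) (Fin.last m) * mkB (m+1) p + _ * 0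
        rw [map_zero]
        ring
    · rcases Fin.eq_castSucc_or_eq_last t with ⟨s, rfl⟩ | rfl
      · refine ⟨P * yv m s, A * yv (m+1) s.castSucc, B' * yv (m+1) s.castSucc, ?_⟩
        rw [hmul]
        show mkB (m+1) p * yv (m+1) s.castSucc = _
        rw [map_mul, inclB_yv, h1]
        ring
      · refine ⟨0, 0, mkB (m+1) p, ?_⟩
        rw [hmul]
        show mkB (m+1) p * yv (m+1) (Fin.last m) =
          inclB m (m+1) (Nat.le_succ m) 0 + _ * 0 + yv (m+1) (Fin.last m) * mkB (m+1) p
        rw [map_zero]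
        ring

lemma eX_mk (n q : ℕ) : eX n q = mkB n (MvPolynomial.rename Sum.inl (MvPolynomial.esymm (Fin n) ℂ q)) := by
  simp only [MvPolynomial.esymm, eX, map_sum, map_prod, MvPolynomial.rename_X, xv]

lemma fY_mk (n q : ℕ) : fY n q = mkB n (MvPolynomial.rename Sum.inr (MvPolynomial.esymm (Fin n) ℂ q)) := by
  simp only [MvPolynomial.esymm, fY, map_sum, map_prod, MvPolynomial.rename_X, yv]

lemma permB_eX (n q : ℕ) (σ : Equiv.Perm (Fin n)) : permB n σ (eX n q) = eX n q := by
  rw [eX_mk, permB_mk, MvPolynomial.rename_rename]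
  have hfun : (Sum.map ⇑σ ⇑σ ∘ Sum.inl : Fin n → Fin n ⊕ Fin n) = Sum.inl ∘ ⇑σ := rfl
  rw [hfun, ← MvPolynomial.rename_rename, MvPolynomial.rename_esymm, ← eX_mk]

lemma permB_fY (n q : ℕ) (σ : Equiv.Perm (Fin n)) : permB n σ (fY n q) = fY n q := by
  rw [fY_mk, permB_mk, MvPolynomial.rename_rename]
  have hfun : (Sum.map ⇑σ ⇑σ ∘ Sum.inr : Fin n → Fin n ⊕ Fin n) = Sum.inr ∘ ⇑σ := rfl
  rw [hfun, ← MvPolynomial.rename_rename, MvPolynomial.rename_esymm, ← fY_mk]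

lemma incl_eX (m q : ℕ) : inclB m (m+1) (Nat.le_succ m) (eX m q) =
    ∑ S ∈ Finset.powersetCard q (Finset.univ : Finset (Fin m)), ∏ t ∈ S, xv (m+1) t.castSucc := by
  simp only [eX, map_sum, map_prod, inclB_xv]

lemma incl_fY (m q : ℕ) : inclB m (m+1) (Nat.le_succ m) (fY m q) =
    ∑ S ∈ Finset.powersetCard q (Finset.univ : Finset (Fin m)), ∏ t ∈ S, yv (m+1) t.castSucc := by
  simp only [fY, map_sum, map_prod, inclB_yv]

lemma incl_prod_xv (m : ℕ) (I : Finset (Fin m)) :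
    inclB m (m+1) (Nat.le_succ m) (∏ t ∈ I, xv m t) = ∏ t ∈ I, xv (m+1) t.castSucc := by
  simp only [map_prod, inclB_xv]

lemma incl_prod_yv (m : ℕ) (J : Finset (Fin m)) :
    inclB m (m+1) (Nat.le_succ m) (∏ t ∈ J, yv m t) = ∏ t ∈ J, yv (m+1) t.castSucc := by
  simp only [map_prod, inclB_yv]

lemma last_not_mem_map (m : ℕ) (S : Finset (Fin m)) :
    Fin.last m ∉ S.map Fin.castSuccEmb := by
  intro hmem
  obtain ⟨t, _, ht⟩ := Finset.mem_map.1 hmem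
  exact absurd ht (ne_of_lt (Fin.castSucc_lt_last t))

/-- `gsum` helper: the sum over subsets of the "old" variables. -/
lemma eX_succ (m q : ℕ) :
    eX (m+1) (q+1) = inclB m (m+1) (Nat.le_succ m) (eX m (q+1))
      + xv (m+1) (Fin.last m) * inclB m (m+1) (Nat.le_succ m) (eX m q) := by
  rw [incl_eX, incl_eX, eX]
  have huniv : (Finset.univ : Finset (Fin (m+1))) =
      insert (Fin.last m) (Finset.univ.map Fin.castSuccEmb) := by
    rw [Fin.univ_castSuccEmb, Finset.cons_eq_insert]
  rw [huniv, Finset.powersetCard_succ_insert (last_not_mem_map m _)]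
  have hdisj : Disjoint (Finset.powersetCard (q+1) (Finset.univ.map Fin.castSuccEmb))
      ((Finset.powersetCard q (Finset.univ.map Fin.castSuccEmb)).image (insert (Fin.last m))) := by
    rw [Finset.disjoint_left]
    intro S hS hS'
    obtain ⟨T, hT, rfl⟩ := Finset.mem_image.1 hS'
    have h1 : Fin.last m ∈ insert (Fin.last m) T := Finset.mem_insert_self _ _
    have h2 := (Finset.mem_powersetCard.1 hS).1 h1
    exact last_not_mem_map m _ h2
  rw [Finset.sum_union hdisj]
  congr 1
  · rw [Finset.powersetCard_map, Finset.sum_map]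
    refine Finset.sum_congr rfl fun S _ => ?_
    have hme : (Finset.mapEmbedding Fin.castSuccEmb).toEmbedding S = S.map Fin.castSuccEmb := rfl
    rw [hme, Finset.prod_map]
    rfl
  · rw [Finset.sum_image ?hinj]
    case hinj =>
      intro S hS T hT h
      have hS' : Fin.last m ∉ S :=
        fun hc => last_not_mem_map m _ ((Finset.mem_powersetCard.1 hS).1 hc)
      have hT' : Fin.last m ∉ T :=
        fun hc => last_not_mem_map m _ ((Finset.mem_powersetCard.1 hT).1 hc)
      have := congrArg (fun U => Finset.erase U (Fin.last m)) h
      simpa [Finset.erase_insert hS', Finset.erase_insert hT'] using this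
    rw [Finset.mul_sum, Finset.powersetCard_map, Finset.sum_map]
    refine Finset.sum_congr rfl fun S _ => ?_
    have hme : (Finset.mapEmbedding Fin.castSuccEmb).toEmbedding S = S.map Fin.castSuccEmb := rfl
    rw [hme, Finset.prod_insert (last_not_mem_map m S), Finset.prod_map]
    rfl

lemma fY_succ (m q : ℕ) :
    fY (m+1) (q+1) = inclB m (m+1) (Nat.le_succ m) (fY m (q+1))
      + yv (m+1) (Fin.last m) * inclB m (m+1) (Nat.le_succ m) (fY m q) := by
  rw [incl_fY, incl_fY, fY]
  have huniv : (Finset.univ : Finset (Fin (m+1))) =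
      insert (Fin.last m) (Finset.univ.map Fin.castSuccEmb) := by
    rw [Fin.univ_castSuccEmb, Finset.cons_eq_insert]
  rw [huniv, Finset.powersetCard_succ_insert (last_not_mem_map m _)]
  have hdisj : Disjoint (Finset.powersetCard (q+1) (Finset.univ.map Fin.castSuccEmb))
      ((Finset.powersetCard q (Finset.univ.map Fin.castSuccEmb)).image (insert (Fin.last m))) := by
    rw [Finset.disjoint_left]
    intro S hS hS'
    obtain ⟨T, hT, rfl⟩ := Finset.mem_image.1 hS'
    have h1 : Fin.last m ∈ insert (Fin.last m) T := Finset.mem_insert_self _ _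
    have h2 := (Finset.mem_powersetCard.1 hS).1 h1
    exact last_not_mem_map m _ h2
  rw [Finset.sum_union hdisj]
  congr 1
  · rw [Finset.powersetCard_map, Finset.sum_map]
    refine Finset.sum_congr rfl fun S _ => ?_
    have hme : (Finset.mapEmbedding Fin.castSuccEmb).toEmbedding S = S.map Fin.castSuccEmb := rfl
    rw [hme, Finset.prod_map]
    rfl
  · rw [Finset.sum_image ?hinj]
    case hinj =>
      intro S hS T hT h
      have hS' : Fin.last m ∉ S :=
        fun hc => last_not_mem_map m _ ((Finset.mem_powersetCard.1 hS).1 hc)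
      have hT' : Fin.last m ∉ T :=
        fun hc => last_not_mem_map m _ ((Finset.mem_powersetCard.1 hT).1 hc)
      have := congrArg (fun U => Finset.erase U (Fin.last m)) h
      simpa [Finset.erase_insert hS', Finset.erase_insert hT'] using this
    rw [Finset.mul_sum, Finset.powersetCard_map, Finset.sum_map]
    refine Finset.sum_congr rfl fun S _ => ?_
    have hme : (Finset.mapEmbedding Fin.castSuccEmb).toEmbedding S = S.map Fin.castSuccEmb := rfl
    rw [hme, Finset.prod_insert (last_not_mem_map m S), Finset.prod_map]
    rfl

-- Sij membership helpers
lemma eX_mem_Sij {n i j q : ℕ} (h1 : 1 ≤ q) (h2 : q < i) : eX n q ∈ Sij n i j :=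
  Or.inl (Or.inl (Or.inl ⟨q, h1, h2, rfl⟩))

lemma xprod_mem_Sij {n i j : ℕ} (I : Finset (Fin n)) (h : I.card = i) :
    (∏ t ∈ I, xv n t) ∈ Sij n i j :=
  Or.inl (Or.inl (Or.inr ⟨I, h, rfl⟩))

lemma fY_mem_Sij {n i j q : ℕ} (h1 : 1 ≤ q) (h2 : q < j) : fY n q ∈ Sij n i j :=
  Or.inl (Or.inr ⟨q, h1, h2, rfl⟩)

lemma yprod_mem_Sij {n i j : ℕ} (J : Finset (Fin n)) (h : J.card = j) :
    (∏ t ∈ J, yv n t) ∈ Sij n i j :=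
  Or.inr ⟨J, h, rfl⟩

lemma permB_prod_xv {n : ℕ} (τ : Equiv.Perm (Fin n)) (I : Finset (Fin n)) :
    permB n τ (∏ t ∈ I, xv n t) = ∏ t ∈ I.image τ, xv n t := by
  rw [Finset.prod_image (fun a _ b _ h => τ.injective h)]
  simp only [map_prod, permB_xv]

lemma permB_prod_yv {n : ℕ} (τ : Equiv.Perm (Fin n)) (J : Finset (Fin n)) :
    permB n τ (∏ t ∈ J, yv n t) = ∏ t ∈ J.image τ, yv n t := by
  rw [Finset.prod_image (fun a _ b _ h => τ.injective h)]
  simp only [map_prod, permB_yv]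

lemma permB_mem_Iij {n i j : ℕ} (τ : Equiv.Perm (Fin n)) {p : B n} (hp : p ∈ Iij n i j) :
    permB n τ p ∈ Iij n i j := by
  have hle : Iij n i j ≤ Ideal.comap (permB n τ).toRingHom (Iij n i j) := by
    rw [Iij, Ideal.span_le]
    rintro p ((((⟨q, h1, h2, rfl⟩ | ⟨I, hI, rfl⟩) | ⟨q, h1, h2, rfl⟩) | ⟨J, hJ, rfl⟩)) <;>
      simp only [SetLike.mem_coe, Ideal.mem_comap, AlgHom.toRingHom_eq_coe, RingHom.coe_coe]
    · rw [permB_eX]; exact Ideal.subset_span (eX_mem_Sij h1 h2)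
    · rw [permB_prod_xv]
      exact Ideal.subset_span (xprod_mem_Sij _ (by rw [Finset.card_image_of_injective _ τ.injective, hI]))
    · rw [permB_fY]; exact Ideal.subset_span (fY_mem_Sij h1 h2)
    · rw [permB_prod_yv]
      exact Ideal.subset_span (yprod_mem_Sij _ (by rw [Finset.card_image_of_injective _ τ.injective, hJ]))
  exact hle hp

lemma permB_mem_span_ext {m i κ : ℕ} (σ : Equiv.Perm (Fin m)) {p : B (m+1)}
    (hp : p ∈ Ideal.span ({xv (m+1) (Fin.last m) ^ κ, yv (m+1) (Fin.last m)} ∪ XXset m i)) :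
    permB (m+1) (extPerm m (m+1) (Nat.le_succ m) σ) p ∈
      Ideal.span ({xv (m+1) (Fin.last m) ^ κ, yv (m+1) (Fin.last m)} ∪ XXset m i) := by
  set τ := extPerm m (m+1) (Nat.le_succ m) σ with hτ
  have hle : Ideal.span ({xv (m+1) (Fin.last m) ^ κ, yv (m+1) (Fin.last m)} ∪ XXset m i) ≤
      Ideal.comap (permB (m+1) τ).toRingHom
        (Ideal.span ({xv (m+1) (Fin.last m) ^ κ, yv (m+1) (Fin.last m)} ∪ XXset m i)) := by
    rw [Ideal.span_le]
    rintro p ((rfl | rfl) | ⟨I, hI, rfl⟩) <;>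
      simp only [SetLike.mem_coe, Ideal.mem_comap, AlgHom.toRingHom_eq_coe, RingHom.coe_coe]
    · rw [map_pow, permB_xv, hτ, extPerm_last]
      exact Ideal.subset_span (Or.inl (Or.inl rfl))
    · rw [permB_yv, hτ, extPerm_last]
      exact Ideal.subset_span (Or.inl (Or.inr rfl))
    · have : permB (m+1) τ (∏ t ∈ I, xv (m+1) t.castSucc) = ∏ t ∈ I.image σ, xv (m+1) t.castSucc := by
        rw [Finset.prod_image (fun a _ b _ h => σ.injective h)]
        simp only [map_prod, permB_xv, hτ, extPerm_castSucc]
      rw [this]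
      exact Ideal.subset_span (Or.inr ⟨I.image σ,
        by rw [Finset.card_image_of_injective _ σ.injective, hI], rfl⟩)
  exact hle hp

lemma permB_mem_LkIdeal {m i j κ : ℕ} (σ : Equiv.Perm (Fin m)) {p : B (m+1)}
    (hp : p ∈ LkIdeal m i j κ) :
    permB (m+1) (extPerm m (m+1) (Nat.le_succ m) σ) p ∈ LkIdeal m i j κ := by
  rw [LkIdeal] at hp ⊢
  obtain ⟨a, ha, b, hb, rfl⟩ := Submodule.mem_sup.1 hp
  rw [map_add]
  exact Submodule.add_mem _ (Ideal.mem_sup_left (permB_mem_Iij _ ha))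
    (Ideal.mem_sup_right (permB_mem_span_ext σ hb))

lemma permB_mem_L0Ideal {m i j : ℕ} (σ : Equiv.Perm (Fin m)) {p : B (m+1)}
    (hp : p ∈ L0Ideal m i j) :
    permB (m+1) (extPerm m (m+1) (Nat.le_succ m) σ) p ∈ L0Ideal m i j := by
  have h1 : L0Ideal m i j = LkIdeal m i j 1 := by
    rw [L0Ideal, LkIdeal, pow_one]
  rw [h1] at hp ⊢
  exact permB_mem_LkIdeal σ hp

lemma permB_mem_MyIdeal {m i j κ : ℕ} (σ : Equiv.Perm (Fin m)) {p : B (m+1)}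
    (hp : p ∈ MyIdeal m i j κ) :
    permB (m+1) (extPerm m (m+1) (Nat.le_succ m) σ) p ∈ MyIdeal m i j κ := by
  rw [MyIdeal] at hp ⊢
  obtain ⟨a, ha, b, hb, rfl⟩ := Submodule.mem_sup.1 hp
  rw [map_add]
  refine Submodule.add_mem _ (Ideal.mem_sup_left (permB_mem_Iij _ ha)) (Ideal.mem_sup_right ?_)
  have hle : Ideal.span {yv (m+1) (Fin.last m) ^ κ} ≤
      Ideal.comap (permB (m+1) (extPerm m (m+1) (Nat.le_succ m) σ)).toRingHom
        (Ideal.span {yv (m+1) (Fin.last m) ^ κ}) := by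
    rw [Ideal.span_le]
    rintro p rfl
    simp only [SetLike.mem_coe, Ideal.mem_comap, AlgHom.toRingHom_eq_coe, RingHom.coe_coe]
    rw [map_pow, permB_yv, extPerm_last]
    exact Ideal.subset_span rfl
  exact hle hb
/-- pullback "ideal of denominators" : `{p : B m | c * incl p ∈ K}`. -/
def pullIdeal (m : ℕ) (c : B (m+1)) (K : Ideal (B (m+1))) : Ideal (B m) where
  carrier := {p | c * inclB m (m+1) (Nat.le_succ m) p ∈ K}
  add_mem' := by
    intro a b ha hb
    simp only [Set.mem_setOf_eq, map_add, mul_add] at *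
    exact K.add_mem ha hb
  zero_mem' := by simp
  smul_mem' := by
    intro r p hp
    simp only [Set.mem_setOf_eq, smul_eq_mul, map_mul] at *
    have : c * (inclB m (m+1) (Nat.le_succ m) r * inclB m (m+1) (Nat.le_succ m) p) =
        inclB m (m+1) (Nat.le_succ m) r * (c * inclB m (m+1) (Nat.le_succ m) p) := by ring
    rw [this]
    exact K.mul_mem_left _ hp

lemma mem_pullIdeal {m : ℕ} {c : B (m+1)} {K : Ideal (B (m+1))} {p : B m} :
    p ∈ pullIdeal m c K ↔ c * inclB m (m+1) (Nat.le_succ m) p ∈ K := Iff.rfl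

lemma xpow_mul_yv {m : ℕ} (k0 : ℕ) :
    yv (m+1) (Fin.last m) * xv (m+1) (Fin.last m) ^ (k0+1) = 0 := by
  linear_combination xv (m+1) (Fin.last m) ^ k0 * xy_zero (m+1) (Fin.last m)

lemma ypow_mul_xv {m : ℕ} (k0 : ℕ) :
    xv (m+1) (Fin.last m) * yv (m+1) (Fin.last m) ^ (k0+1) = 0 := by
  linear_combination yv (m+1) (Fin.last m) ^ k0 * xy_zero (m+1) (Fin.last m)

lemma last_not_mem_image {m : ℕ} (S : Finset (Fin m)) :
    Fin.last m ∉ S.image Fin.castSucc := by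
  intro hmem
  obtain ⟨t, _, ht⟩ := Finset.mem_image.1 hmem
  exact absurd ht (ne_of_lt (Fin.castSucc_lt_last t))

lemma incl_prod_xv' (m : ℕ) (I : Finset (Fin m)) :
    inclB m (m+1) (Nat.le_succ m) (∏ t ∈ I, xv m t) = ∏ t ∈ I.image Fin.castSucc, xv (m+1) t := by
  rw [incl_prod_xv, Finset.prod_image (fun a _ b _ h => Fin.castSucc_injective m h)]

lemma incl_prod_yv' (m : ℕ) (J : Finset (Fin m)) :
    inclB m (m+1) (Nat.le_succ m) (∏ t ∈ J, yv m t) = ∏ t ∈ J.image Fin.castSucc, yv (m+1) t := by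
  rw [incl_prod_yv, Finset.prod_image (fun a _ b _ h => Fin.castSucc_injective m h)]

-- well-definedness of φ₀
lemma wd_L0 (m i j : ℕ) (hi : 1 ≤ i) :
    Iij m (i-1) j ≤ pullIdeal m 1 (L0Ideal m i j) := by
  rw [Iij, Ideal.span_le]
  rintro p ((((⟨q, h1, h2, rfl⟩ | ⟨I, hI, rfl⟩) | ⟨q, h1, h2, rfl⟩) | ⟨J, hJ, rfl⟩)) <;>
    rw [SetLike.mem_coe, mem_pullIdeal, one_mul]
  · obtain ⟨s, rfl⟩ : ∃ s, q = s + 1 := ⟨q - 1, by omega⟩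
    have h3 : inclB m (m+1) (Nat.le_succ m) (eX m (s+1)) =
        eX (m+1) (s+1) - xv (m+1) (Fin.last m) * inclB m (m+1) (Nat.le_succ m) (eX m s) := by
      rw [eX_succ]; ring
    rw [h3]
    refine sub_mem (Ideal.mem_sup_left (Ideal.subset_span (eX_mem_Sij (by omega) (by omega)))) ?_
    exact Ideal.mul_mem_right _ _ (Ideal.mem_sup_right (Ideal.subset_span (Or.inl (Or.inl rfl))))
  · rw [incl_prod_xv]
    exact Ideal.mem_sup_right (Ideal.subset_span (Or.inr ⟨I, hI, rfl⟩))
  · obtain ⟨s, rfl⟩ : ∃ s, q = s + 1 := ⟨q - 1, by omega⟩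
    have h3 : inclB m (m+1) (Nat.le_succ m) (fY m (s+1)) =
        fY (m+1) (s+1) - yv (m+1) (Fin.last m) * inclB m (m+1) (Nat.le_succ m) (fY m s) := by
      rw [fY_succ]; ring
    rw [h3]
    refine sub_mem (Ideal.mem_sup_left (Ideal.subset_span (fY_mem_Sij (by omega) h2))) ?_
    exact Ideal.mul_mem_right _ _ (Ideal.mem_sup_right (Ideal.subset_span (Or.inl (Or.inr rfl))))
  · rw [incl_prod_yv']
    refine Ideal.mem_sup_left (Ideal.subset_span (yprod_mem_Sij _ ?_))
    rw [Finset.card_image_of_injective _ (Fin.castSucc_injective m), hJ]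

-- well-definedness of φ_k
lemma wd_Lk (m i j : ℕ) (hi : 1 ≤ i) (k0 : ℕ) :
    Iij m (i-1) j ≤ pullIdeal m (xv (m+1) (Fin.last m) ^ (k0+1)) (LkIdeal m i j (k0+2)) := by
  rw [Iij, Ideal.span_le]
  rintro p ((((⟨q, h1, h2, rfl⟩ | ⟨I, hI, rfl⟩) | ⟨q, h1, h2, rfl⟩) | ⟨J, hJ, rfl⟩)) <;>
    rw [SetLike.mem_coe, mem_pullIdeal]
  · obtain ⟨s, rfl⟩ : ∃ s, q = s + 1 := ⟨q - 1, by omega⟩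
    have h3 : xv (m+1) (Fin.last m) ^ (k0+1) * inclB m (m+1) (Nat.le_succ m) (eX m (s+1)) =
        xv (m+1) (Fin.last m) ^ (k0+1) * eX (m+1) (s+1)
          - xv (m+1) (Fin.last m) ^ (k0+2) * inclB m (m+1) (Nat.le_succ m) (eX m s) := by
      linear_combination (-(xv (m+1) (Fin.last m) ^ (k0+1))) * eX_succ m s
    rw [h3]
    refine sub_mem (Ideal.mem_sup_left
      (Ideal.mul_mem_left _ _ (Ideal.subset_span (eX_mem_Sij (by omega) (by omega))))) ?_
    exact Ideal.mul_mem_right _ _ (Ideal.mem_sup_right (Ideal.subset_span (Or.inl (Or.inl rfl))))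
  · rw [incl_prod_xv]
    exact Ideal.mul_mem_left _ _ (Ideal.mem_sup_right (Ideal.subset_span (Or.inr ⟨I, hI, rfl⟩)))
  · obtain ⟨s, rfl⟩ : ∃ s, q = s + 1 := ⟨q - 1, by omega⟩
    have h3 : xv (m+1) (Fin.last m) ^ (k0+1) * inclB m (m+1) (Nat.le_succ m) (fY m (s+1)) =
        xv (m+1) (Fin.last m) ^ (k0+1) * fY (m+1) (s+1) := by
      linear_combination (-(xv (m+1) (Fin.last m) ^ (k0+1))) * fY_succ m s
        - inclB m (m+1) (Nat.le_succ m) (fY m s) * xpow_mul_yv k0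
    rw [h3]
    exact Ideal.mem_sup_left (Ideal.mul_mem_left _ _ (Ideal.subset_span (fY_mem_Sij (by omega) h2)))
  · rw [incl_prod_yv']
    refine Ideal.mul_mem_left _ _ (Ideal.mem_sup_left (Ideal.subset_span (yprod_mem_Sij _ ?_)))
    rw [Finset.card_image_of_injective _ (Fin.castSucc_injective m), hJ]

-- well-definedness of φ'_{k'}
lemma wd_My (m i j : ℕ) (hj : 1 ≤ j) (k0 : ℕ) :
    Iij m i (j-1) ≤ pullIdeal m (yv (m+1) (Fin.last m) ^ (k0+1)) (MyIdeal m i j (k0+2)) := by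
  rw [Iij, Ideal.span_le]
  rintro p ((((⟨q, h1, h2, rfl⟩ | ⟨I, hI, rfl⟩) | ⟨q, h1, h2, rfl⟩) | ⟨J, hJ, rfl⟩)) <;>
    rw [SetLike.mem_coe, mem_pullIdeal]
  · obtain ⟨s, rfl⟩ : ∃ s, q = s + 1 := ⟨q - 1, by omega⟩
    have h3 : yv (m+1) (Fin.last m) ^ (k0+1) * inclB m (m+1) (Nat.le_succ m) (eX m (s+1)) =
        yv (m+1) (Fin.last m) ^ (k0+1) * eX (m+1) (s+1) := by
      linear_combination (-(yv (m+1) (Fin.last m) ^ (k0+1))) * eX_succ m s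
        - inclB m (m+1) (Nat.le_succ m) (eX m s) * ypow_mul_xv k0
    rw [h3]
    exact Ideal.mem_sup_left (Ideal.mul_mem_left _ _ (Ideal.subset_span (eX_mem_Sij (by omega) h2)))
  · rw [incl_prod_xv']
    refine Ideal.mul_mem_left _ _ (Ideal.mem_sup_left (Ideal.subset_span (xprod_mem_Sij _ ?_)))
    rw [Finset.card_image_of_injective _ (Fin.castSucc_injective m), hI]
  · obtain ⟨s, rfl⟩ : ∃ s, q = s + 1 := ⟨q - 1, by omega⟩
    have h3 : yv (m+1) (Fin.last m) ^ (k0+1) * inclB m (m+1) (Nat.le_succ m) (fY m (s+1)) =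
        yv (m+1) (Fin.last m) ^ (k0+1) * fY (m+1) (s+1)
          - yv (m+1) (Fin.last m) ^ (k0+2) * inclB m (m+1) (Nat.le_succ m) (fY m s) := by
      linear_combination (-(yv (m+1) (Fin.last m) ^ (k0+1))) * fY_succ m s
    rw [h3]
    refine sub_mem (Ideal.mem_sup_left
      (Ideal.mul_mem_left _ _ (Ideal.subset_span (fY_mem_Sij (by omega) (by omega))))) ?_
    exact Ideal.mul_mem_right _ _ (Ideal.mem_sup_right (Ideal.subset_span rfl))
  · rw [incl_prod_yv']
    have h3 : yv (m+1) (Fin.last m) ^ (k0+1) * ∏ t ∈ J.image Fin.castSucc, yv (m+1) t =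
        yv (m+1) (Fin.last m) ^ k0 *
          ∏ t ∈ insert (Fin.last m) (J.image Fin.castSucc), yv (m+1) t := by
      rw [Finset.prod_insert (last_not_mem_image J)]
      ring
    rw [h3]
    refine Ideal.mul_mem_left _ _ (Ideal.mem_sup_left (Ideal.subset_span (yprod_mem_Sij _ ?_)))
    rw [Finset.card_insert_of_notMem (last_not_mem_image J),
      Finset.card_image_of_injective _ (Fin.castSucc_injective m), hJ]
    omega
lemma surj_L0 (m i j : ℕ) (p : B (m+1)) :
    ∃ P : B m, p - inclB m (m+1) (Nat.le_succ m) P ∈ L0Ideal m i j := by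
  obtain ⟨P, A, B', rfl⟩ := decompB p
  refine ⟨P, ?_⟩
  have h3 : inclB m (m+1) (Nat.le_succ m) P + xv (m+1) (Fin.last m) * A
      + yv (m+1) (Fin.last m) * B' - inclB m (m+1) (Nat.le_succ m) P
      = xv (m+1) (Fin.last m) * A + yv (m+1) (Fin.last m) * B' := by ring
  rw [h3]
  refine add_mem ?_ ?_
  · exact Ideal.mul_mem_right _ _ (Ideal.mem_sup_right (Ideal.subset_span (Or.inl (Or.inl rfl))))
  · exact Ideal.mul_mem_right _ _ (Ideal.mem_sup_right (Ideal.subset_span (Or.inl (Or.inr rfl))))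

lemma mul_xpow_decomp {m : ℕ} (k0 : ℕ) (r : B (m+1)) :
    ∃ Q A, r * xv (m+1) (Fin.last m) ^ (k0+1) =
      xv (m+1) (Fin.last m) ^ (k0+1) * inclB m (m+1) (Nat.le_succ m) Q
        + xv (m+1) (Fin.last m) ^ (k0+2) * A := by
  obtain ⟨Q, A, B', rfl⟩ := decompB r
  exact ⟨Q, A, by linear_combination B' * xpow_mul_yv (m := m) k0⟩

lemma mul_ypow_decomp {m : ℕ} (k0 : ℕ) (r : B (m+1)) :
    ∃ Q A, r * yv (m+1) (Fin.last m) ^ (k0+1) =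
      yv (m+1) (Fin.last m) ^ (k0+1) * inclB m (m+1) (Nat.le_succ m) Q
        + yv (m+1) (Fin.last m) ^ (k0+2) * A := by
  obtain ⟨Q, B', A, rfl⟩ := decompB r
  exact ⟨Q, A, by linear_combination B' * ypow_mul_xv (m := m) k0⟩

lemma surj_Lk (m i j : ℕ) (k0 : ℕ) (p : B (m+1)) (hp : p ∈ LkIdeal m i j (k0+1)) :
    ∃ P : B m, p - xv (m+1) (Fin.last m) ^ (k0+1) * inclB m (m+1) (Nat.le_succ m) P
      ∈ LkIdeal m i j (k0+2) := by
  obtain ⟨a, ha, b, hb, rfl⟩ := Submodule.mem_sup.1 hp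
  clear hp
  have key : ∃ P : B m, b - xv (m+1) (Fin.last m) ^ (k0+1) * inclB m (m+1) (Nat.le_succ m) P
      ∈ LkIdeal m i j (k0+2) := by
    induction hb using Submodule.span_induction with
    | mem x hx =>
      rcases hx with (rfl | rfl) | ⟨I, hI, rfl⟩
      · refine ⟨1, ?_⟩
        rw [map_one, mul_one, sub_self]
        exact zero_mem _
      · refine ⟨0, ?_⟩
        rw [map_zero, mul_zero, sub_zero]
        exact Ideal.mem_sup_right (Ideal.subset_span (Or.inl (Or.inr rfl)))
      · refine ⟨0, ?_⟩
        rw [map_zero, mul_zero, sub_zero]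
        exact Ideal.mem_sup_right (Ideal.subset_span (Or.inr ⟨I, hI, rfl⟩))
    | zero =>
      refine ⟨0, ?_⟩
      rw [map_zero, mul_zero, sub_zero]
      exact zero_mem _
    | add x y hx hy ihx ihy =>
      obtain ⟨P1, h1⟩ := ihx
      obtain ⟨P2, h2⟩ := ihy
      refine ⟨P1 + P2, ?_⟩
      have h3 : x + y - xv (m+1) (Fin.last m) ^ (k0+1)
          * inclB m (m+1) (Nat.le_succ m) (P1 + P2)
          = (x - xv (m+1) (Fin.last m) ^ (k0+1) * inclB m (m+1) (Nat.le_succ m) P1)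
            + (y - xv (m+1) (Fin.last m) ^ (k0+1) * inclB m (m+1) (Nat.le_succ m) P2) := by
        rw [map_add]; ring
      rw [h3]
      exact add_mem h1 h2
    | smul r x hx ih =>
      obtain ⟨P, hP⟩ := ih
      obtain ⟨Q, A, hQA⟩ := mul_xpow_decomp (m := m) k0 r
      refine ⟨Q * P, ?_⟩
      have h3 : r • x - xv (m+1) (Fin.last m) ^ (k0+1)
          * inclB m (m+1) (Nat.le_succ m) (Q * P)
          = r * (x - xv (m+1) (Fin.last m) ^ (k0+1) * inclB m (m+1) (Nat.le_succ m) P)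
            + xv (m+1) (Fin.last m) ^ (k0+2) * (A * inclB m (m+1) (Nat.le_succ m) P) := by
        rw [smul_eq_mul, map_mul]
        linear_combination inclB m (m+1) (Nat.le_succ m) P * hQA
      rw [h3]
      refine add_mem (Ideal.mul_mem_left _ _ hP) ?_
      exact Ideal.mul_mem_right _ _
        (Ideal.mem_sup_right (Ideal.subset_span (Or.inl (Or.inl rfl))))
  obtain ⟨P, hP⟩ := key
  refine ⟨P, ?_⟩
  have h3 : a + b - xv (m+1) (Fin.last m) ^ (k0+1) * inclB m (m+1) (Nat.le_succ m) P
      = a + (b - xv (m+1) (Fin.last m) ^ (k0+1) * inclB m (m+1) (Nat.le_succ m) P) := by ring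
  rw [h3]
  exact add_mem (Ideal.mem_sup_left ha) hP

lemma surj_My (m i j : ℕ) (k0 : ℕ) (p : B (m+1)) (hp : p ∈ MyIdeal m i j (k0+1)) :
    ∃ P : B m, p - yv (m+1) (Fin.last m) ^ (k0+1) * inclB m (m+1) (Nat.le_succ m) P
      ∈ MyIdeal m i j (k0+2) := by
  obtain ⟨a, ha, b, hb, rfl⟩ := Submodule.mem_sup.1 hp
  clear hp
  have key : ∃ P : B m, b - yv (m+1) (Fin.last m) ^ (k0+1) * inclB m (m+1) (Nat.le_succ m) P
      ∈ MyIdeal m i j (k0+2) := by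
    induction hb using Submodule.span_induction with
    | mem x hx =>
      rcases hx with rfl
      refine ⟨1, ?_⟩
      rw [map_one, mul_one, sub_self]
      exact zero_mem _
    | zero =>
      refine ⟨0, ?_⟩
      rw [map_zero, mul_zero, sub_zero]
      exact zero_mem _
    | add x y hx hy ihx ihy =>
      obtain ⟨P1, h1⟩ := ihx
      obtain ⟨P2, h2⟩ := ihy
      refine ⟨P1 + P2, ?_⟩
      have h3 : x + y - yv (m+1) (Fin.last m) ^ (k0+1)
          * inclB m (m+1) (Nat.le_succ m) (P1 + P2)
          = (x - yv (m+1) (Fin.last m) ^ (k0+1) * inclB m (m+1) (Nat.le_succ m) P1)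
            + (y - yv (m+1) (Fin.last m) ^ (k0+1) * inclB m (m+1) (Nat.le_succ m) P2) := by
        rw [map_add]; ring
      rw [h3]
      exact add_mem h1 h2
    | smul r x hx ih =>
      obtain ⟨P, hP⟩ := ih
      obtain ⟨Q, A, hQA⟩ := mul_ypow_decomp (m := m) k0 r
      refine ⟨Q * P, ?_⟩
      have h3 : r • x - yv (m+1) (Fin.last m) ^ (k0+1)
          * inclB m (m+1) (Nat.le_succ m) (Q * P)
          = r * (x - yv (m+1) (Fin.last m) ^ (k0+1) * inclB m (m+1) (Nat.le_succ m) P)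
            + yv (m+1) (Fin.last m) ^ (k0+2) * (A * inclB m (m+1) (Nat.le_succ m) P) := by
        rw [smul_eq_mul, map_mul]
        linear_combination inclB m (m+1) (Nat.le_succ m) P * hQA
      rw [h3]
      refine add_mem (Ideal.mul_mem_left _ _ hP) ?_
      exact Ideal.mul_mem_right _ _ (Ideal.mem_sup_right (Ideal.subset_span rfl))
  obtain ⟨P, hP⟩ := key
  refine ⟨P, ?_⟩
  have h3 : a + b - yv (m+1) (Fin.last m) ^ (k0+1) * inclB m (m+1) (Nat.le_succ m) P
      = a + (b - yv (m+1) (Fin.last m) ^ (k0+1) * inclB m (m+1) (Nat.le_succ m) P) := by ring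
  rw [h3]
  exact add_mem (Ideal.mem_sup_left ha) hP

lemma sqMk_eq_iff {n : ℕ} (K K' : Ideal (B n)) (a b : B n) (ha : a ∈ K) (hb : b ∈ K) :
    sqMk n K K' a ha = sqMk n K K' b hb ↔ a - b ∈ K' := by
  rw [sqMk, sqMk, Submodule.Quotient.eq]
  simp [Submodule.mem_comap]

/-- a `ℂ`-linear map out of an ideal quotient. -/
def liftC {n : ℕ} (I : Ideal (B n)) {N : Type*} [AddCommGroup N] [Module ℂ N]
    (f : B n →ₗ[ℂ] N) (h : ∀ x ∈ I, f x = 0) : (B n ⧸ I) →ₗ[ℂ] N :=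
  (Submodule.liftQ (I.restrictScalars ℂ) f h).comp
    (Submodule.Quotient.restrictScalarsEquiv ℂ I).symm.toLinearMap

lemma liftC_mk {n : ℕ} (I : Ideal (B n)) {N : Type*} [AddCommGroup N] [Module ℂ N]
    (f : B n →ₗ[ℂ] N) (h : ∀ x ∈ I, f x = 0) (P : B n) :
    liftC I f h (Ideal.Quotient.mk I P) = f P := by
  have h1 : (Ideal.Quotient.mk I P : B n ⧸ I) = Submodule.Quotient.mk P := rfl
  rw [liftC, LinearMap.comp_apply, h1, LinearEquiv.coe_toLinearMap,
    Submodule.Quotient.restrictScalarsEquiv_symm_mk]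
  rfl
/-- (Here `n = m + 1`, so `i + j = n + 1` reads `i + j = m + 2`.)
For `i, j ≥ 1` with `i + j = n + 1`, `1 ≤ k ≤ i−1` and `1 ≤ k' ≤ j−1`, the three maps
`φ₀ : R^{n−1}_{i−1,j} → R^n_{i,j}/⟨xₙ, yₙ, 𝒳^{(n−1)}_{i−1}⟩`, `P ↦ P`,
`φ_k : R^{n−1}_{i−1,j} → ⟨xₙ^k, yₙ, 𝒳⟩/⟨xₙ^{k+1}, yₙ, 𝒳⟩`, `P ↦ xₙ^k P`, and
`φ'_{k'} : R^{n−1}_{i,j−1} → ⟨yₙ^{k'}⟩/⟨yₙ^{k'+1}⟩`, `P ↦ yₙ^{k'} P`,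
are well-defined surjective homomorphisms of `ℂ[S_{n−1}]`-modules
(equivariance is expressed on representatives, with `S_{n−1} ≤ Sₙ` permuting the
first `n−1` letters). -/
theorem recursive_surjections_extreme_case (m i j k k' : ℕ) (hi : 1 ≤ i) (hj : 1 ≤ j)
    (hij : i + j = m + 2) (hk1 : 1 ≤ k) (hk2 : k ≤ i - 1) (hk'1 : 1 ≤ k') (hk'2 : k' ≤ j - 1) :
    (∃ φ : (B m ⧸ Iij m (i - 1) j) →ₗ[ℂ] (B (m + 1) ⧸ L0Ideal m i j),
      (∀ P : B m, φ (Ideal.Quotient.mk (Iij m (i - 1) j) P) =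
        Ideal.Quotient.mk (L0Ideal m i j) (inclB m (m + 1) (Nat.le_succ m) P)) ∧
      Function.Surjective φ ∧
      (∀ (σ : Equiv.Perm (Fin m)) (P : B m) (Q : B (m + 1)),
        φ (Ideal.Quotient.mk (Iij m (i - 1) j) P) = Ideal.Quotient.mk (L0Ideal m i j) Q →
        φ (Ideal.Quotient.mk (Iij m (i - 1) j) (permB m σ P)) =
          Ideal.Quotient.mk (L0Ideal m i j) (permB (m + 1) (extPerm m (m + 1) (Nat.le_succ m) σ) Q))) ∧
    (∃ φ : (B m ⧸ Iij m (i - 1) j) →ₗ[ℂ] SQ (m + 1) (LkIdeal m i j k) (LkIdeal m i j (k + 1)),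
      (∀ P : B m, φ (Ideal.Quotient.mk (Iij m (i - 1) j) P) =
        sqMk (m + 1) (LkIdeal m i j k) (LkIdeal m i j (k + 1))
          (xv (m + 1) (Fin.last m) ^ k * inclB m (m + 1) (Nat.le_succ m) P)
          (Ideal.mul_mem_right _ _ (Ideal.mem_sup_right (Ideal.subset_span (by simp))))) ∧
      Function.Surjective φ ∧
      (∀ (σ : Equiv.Perm (Fin m)) (P : B m) (p : B (m + 1)) (hp : p ∈ LkIdeal m i j k)
        (hq : permB (m + 1) (extPerm m (m + 1) (Nat.le_succ m) σ) p ∈ LkIdeal m i j k),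
        φ (Ideal.Quotient.mk (Iij m (i - 1) j) P) =
          sqMk (m + 1) (LkIdeal m i j k) (LkIdeal m i j (k + 1)) p hp →
        φ (Ideal.Quotient.mk (Iij m (i - 1) j) (permB m σ P)) =
          sqMk (m + 1) (LkIdeal m i j k) (LkIdeal m i j (k + 1))
            (permB (m + 1) (extPerm m (m + 1) (Nat.le_succ m) σ) p) hq)) ∧
    (∃ φ : (B m ⧸ Iij m i (j - 1)) →ₗ[ℂ] SQ (m + 1) (MyIdeal m i j k') (MyIdeal m i j (k' + 1)),
      (∀ P : B m, φ (Ideal.Quotient.mk (Iij m i (j - 1)) P) =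
        sqMk (m + 1) (MyIdeal m i j k') (MyIdeal m i j (k' + 1))
          (yv (m + 1) (Fin.last m) ^ k' * inclB m (m + 1) (Nat.le_succ m) P)
          (Ideal.mul_mem_right _ _ (Ideal.mem_sup_right (Ideal.subset_span rfl)))) ∧
      Function.Surjective φ ∧
      (∀ (σ : Equiv.Perm (Fin m)) (P : B m) (p : B (m + 1)) (hp : p ∈ MyIdeal m i j k')
        (hq : permB (m + 1) (extPerm m (m + 1) (Nat.le_succ m) σ) p ∈ MyIdeal m i j k'),
        φ (Ideal.Quotient.mk (Iij m i (j - 1)) P) =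
          sqMk (m + 1) (MyIdeal m i j k') (MyIdeal m i j (k' + 1)) p hp →
        φ (Ideal.Quotient.mk (Iij m i (j - 1)) (permB m σ P)) =
          sqMk (m + 1) (MyIdeal m i j k') (MyIdeal m i j (k' + 1))
            (permB (m + 1) (extPerm m (m + 1) (Nat.le_succ m) σ) p) hq)) := by
  obtain ⟨k0, rfl⟩ : ∃ k0, k = k0 + 1 := ⟨k - 1, by omega⟩
  obtain ⟨k0', rfl⟩ : ∃ k0', k' = k0' + 1 := ⟨k' - 1, by omega⟩
  refine ⟨?_, ?_, ?_⟩
  · -- φ₀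
    have hker : ∀ x ∈ Iij m (i-1) j,
        ((Ideal.Quotient.mkₐ ℂ (L0Ideal m i j)).comp
          (inclB m (m+1) (Nat.le_succ m))).toLinearMap x = 0 := by
      intro x hx
      have h1 := wd_L0 m i j hi hx
      rw [mem_pullIdeal, one_mul] at h1
      simpa [Ideal.Quotient.mkₐ_eq_mk, Ideal.Quotient.eq_zero_iff_mem] using h1
    have happ : ∀ P : B m,
        liftC (Iij m (i-1) j) _ hker (Ideal.Quotient.mk (Iij m (i-1) j) P) =
          Ideal.Quotient.mk (L0Ideal m i j) (inclB m (m+1) (Nat.le_succ m) P) := by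
      intro P
      rw [liftC_mk]
      simp [Ideal.Quotient.mkₐ_eq_mk]
    refine ⟨liftC (Iij m (i-1) j) _ hker, happ, ?_, ?_⟩
    · intro q
      obtain ⟨Q, rfl⟩ := Ideal.Quotient.mk_surjective q
      obtain ⟨P, hP⟩ := surj_L0 m i j Q
      refine ⟨Ideal.Quotient.mk _ P, ?_⟩
      rw [happ, Ideal.Quotient.mk_eq_mk_iff_sub_mem]
      simpa [neg_sub] using neg_mem hP
    · intro σ P Q hPQ
      rw [happ] at hPQ
      rw [happ, ← permB_inclB, Ideal.Quotient.mk_eq_mk_iff_sub_mem, ← map_sub]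
      exact permB_mem_L0Ideal σ (Ideal.Quotient.mk_eq_mk_iff_sub_mem _ _ |>.1 hPQ)
  · -- φ_k
    set c : B (m+1) := xv (m+1) (Fin.last m) ^ (k0+1) with hc
    have hcK : ∀ P : B m, c * inclB m (m+1) (Nat.le_succ m) P ∈
        (LkIdeal m i j (k0+1)).restrictScalars ℂ := fun P =>
      Ideal.mul_mem_right _ _ (Ideal.mem_sup_right (Ideal.subset_span (Or.inl (Or.inl rfl))))
    set f : B m →ₗ[ℂ] SQ (m+1) (LkIdeal m i j (k0+1)) (LkIdeal m i j (k0+1+1)) :=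
      (Submodule.mkQ _).comp (LinearMap.codRestrict ((LkIdeal m i j (k0+1)).restrictScalars ℂ)
        ((LinearMap.mulLeft ℂ c).comp (inclB m (m+1) (Nat.le_succ m)).toLinearMap) hcK) with hf
    have hfapp : ∀ (P : B m) (hmem : c * inclB m (m+1) (Nat.le_succ m) P ∈ LkIdeal m i j (k0+1)),
        f P = sqMk (m+1) (LkIdeal m i j (k0+1)) (LkIdeal m i j (k0+1+1))
          (c * inclB m (m+1) (Nat.le_succ m) P) hmem := fun P hmem => rfl
    have hker : ∀ x ∈ Iij m (i-1) j, f x = 0 := by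
      intro x hx
      have h1 := wd_Lk m i j hi k0 hx
      rw [mem_pullIdeal] at h1
      rw [hfapp x (hcK x)]
      refine (Submodule.Quotient.mk_eq_zero _).2 ?_
      simpa [Submodule.mem_comap] using h1
    have happ : ∀ P : B m,
        liftC (Iij m (i-1) j) f hker (Ideal.Quotient.mk (Iij m (i-1) j) P) =
          sqMk (m+1) (LkIdeal m i j (k0+1)) (LkIdeal m i j (k0+1+1))
            (c * inclB m (m+1) (Nat.le_succ m) P) (hcK P) := by
      intro P
      rw [liftC_mk, hfapp P (hcK P)]
    refine ⟨liftC (Iij m (i-1) j) f hker, fun P => happ P, ?_, ?_⟩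
    · intro q
      obtain ⟨⟨p, hp⟩, rfl⟩ := Submodule.Quotient.mk_surjective _ q
      obtain ⟨P, hP⟩ := surj_Lk m i j k0 p hp
      refine ⟨Ideal.Quotient.mk _ P, ?_⟩
      rw [happ]
      show sqMk (m+1) (LkIdeal m i j (k0+1)) (LkIdeal m i j (k0+1+1)) _ (hcK P) =
        sqMk (m+1) (LkIdeal m i j (k0+1)) (LkIdeal m i j (k0+1+1)) p hp
      refine (sqMk_eq_iff _ _ _ _ _ _).2 ?_
      simpa [neg_sub] using neg_mem hP
    · intro σ P p hp hq heq
      rw [happ] at heq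
      have h1 : c * inclB m (m+1) (Nat.le_succ m) P - p ∈ LkIdeal m i j (k0+1+1) :=
        (sqMk_eq_iff _ _ _ _ _ _).1 heq
      rw [happ]
      refine (sqMk_eq_iff _ _ _ _ _ _).2 ?_
      have h2 : c * inclB m (m+1) (Nat.le_succ m) (permB m σ P) =
          permB (m+1) (extPerm m (m+1) (Nat.le_succ m) σ) (c * inclB m (m+1) (Nat.le_succ m) P) := by
        rw [map_mul, hc, map_pow, permB_xv, extPerm_last, permB_inclB]
      rw [h2, ← map_sub]
      exact permB_mem_LkIdeal σ h1
  · -- φ'_{k'}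
    set c : B (m+1) := yv (m+1) (Fin.last m) ^ (k0'+1) with hc
    have hcK : ∀ P : B m, c * inclB m (m+1) (Nat.le_succ m) P ∈
        (MyIdeal m i j (k0'+1)).restrictScalars ℂ := fun P =>
      Ideal.mul_mem_right _ _ (Ideal.mem_sup_right (Ideal.subset_span rfl))
    set f : B m →ₗ[ℂ] SQ (m+1) (MyIdeal m i j (k0'+1)) (MyIdeal m i j (k0'+1+1)) :=
      (Submodule.mkQ _).comp (LinearMap.codRestrict ((MyIdeal m i j (k0'+1)).restrictScalars ℂ)
        ((LinearMap.mulLeft ℂ c).comp (inclB m (m+1) (Nat.le_succ m)).toLinearMap) hcK) with hf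
    have hfapp : ∀ (P : B m) (hmem : c * inclB m (m+1) (Nat.le_succ m) P ∈ MyIdeal m i j (k0'+1)),
        f P = sqMk (m+1) (MyIdeal m i j (k0'+1)) (MyIdeal m i j (k0'+1+1))
          (c * inclB m (m+1) (Nat.le_succ m) P) hmem := fun P hmem => rfl
    have hker : ∀ x ∈ Iij m i (j-1), f x = 0 := by
      intro x hx
      have h1 := wd_My m i j hj k0' hx
      rw [mem_pullIdeal] at h1
      rw [hfapp x (hcK x)]
      refine (Submodule.Quotient.mk_eq_zero _).2 ?_
      simpa [Submodule.mem_comap] using h1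
    have happ : ∀ P : B m,
        liftC (Iij m i (j-1)) f hker (Ideal.Quotient.mk (Iij m i (j-1)) P) =
          sqMk (m+1) (MyIdeal m i j (k0'+1)) (MyIdeal m i j (k0'+1+1))
            (c * inclB m (m+1) (Nat.le_succ m) P) (hcK P) := by
      intro P
      rw [liftC_mk, hfapp P (hcK P)]
    refine ⟨liftC (Iij m i (j-1)) f hker, fun P => happ P, ?_, ?_⟩
    · intro q
      obtain ⟨⟨p, hp⟩, rfl⟩ := Submodule.Quotient.mk_surjective _ q
      obtain ⟨P, hP⟩ := surj_My m i j k0' p hp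
      refine ⟨Ideal.Quotient.mk _ P, ?_⟩
      rw [happ]
      show sqMk (m+1) (MyIdeal m i j (k0'+1)) (MyIdeal m i j (k0'+1+1)) _ (hcK P) =
        sqMk (m+1) (MyIdeal m i j (k0'+1)) (MyIdeal m i j (k0'+1+1)) p hp
      refine (sqMk_eq_iff _ _ _ _ _ _).2 ?_
      simpa [neg_sub] using neg_mem hP
    · intro σ P p hp hq heq
      rw [happ] at heq
      have h1 : c * inclB m (m+1) (Nat.le_succ m) P - p ∈ MyIdeal m i j (k0'+1+1) :=
        (sqMk_eq_iff _ _ _ _ _ _).1 heq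
      rw [happ]
      refine (sqMk_eq_iff _ _ _ _ _ _).2 ?_
      have h2 : c * inclB m (m+1) (Nat.le_succ m) (permB m σ P) =
          permB (m+1) (extPerm m (m+1) (Nat.le_succ m) σ) (c * inclB m (m+1) (Nat.le_succ m) P) := by
        rw [map_mul, hc, map_pow, permB_yv, extPerm_last, permB_inclB]
      rw [h2, ← map_sub]
      exact permB_mem_MyIdeal σ h1

end
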